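/- arXiv:1101.1113 — 3 statements merged into one kernel-verified Lean document; each statement's English description precedes it below -/
import Mathlib

section
/- Let W be a finite Coxeter group acting as a reflection group on a Euclidean space E spanned by its root system. Then any Coxeter element w (a product of all simple reflections, each occurring once) does not have 1 as an eigenvalue. -/
open scoped RealInnerProductSpace

lemma aux_span (E : Type*) [NormedAddCommGroup E] [InnerProductSpace ℝ E]
    (n : ℕ) (α : Fin n → E) (s : Fin n → E →ₗ[ℝ] E)
    (hs : ∀ i v, s i v = v - (2 * ⟪v, α i⟫ / ⟪α i, α i⟫) • α i) :
    ∀ (l : List (Fin n)) (v : E),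
      (l.map s).prod v - v ∈ Submodule.span ℝ (α '' {i | i ∈ l}) := by
  intro l
  induction l with
  | nil => intro v; simp
  | cons i l ih =>
    intro v
    have h1 : ((i :: l).map s).prod v = s i ((l.map s).prod v) := by
      simp [List.map_cons, List.prod_cons, Module.End.mul_apply]
    set u := (l.map s).prod v with hu
    have h2 : s i u = u - (2 * ⟪u, α i⟫ / ⟪α i, α i⟫) • α i := hs i u
    have hmem1 : u - v ∈ Submodule.span ℝ (α '' {j | j ∈ i :: l}) := by
      refine Submodule.span_mono ?_ (ih v)
      apply Set.image_mono
      intro j hj; exact List.mem_cons_of_mem _ hj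
    have hmem2 : α i ∈ Submodule.span ℝ (α '' {j | j ∈ i :: l}) :=
      Submodule.subset_span ⟨i, List.mem_cons_self, rfl⟩
    have : ((i :: l).map s).prod v - v
        = (u - v) - (2 * ⟪u, α i⟫ / ⟪α i, α i⟫) • α i := by
      rw [h1, h2]; abel
    rw [this]
    exact Submodule.sub_mem _ hmem1 (Submodule.smul_mem _ _ hmem2)

lemma aux_fix (E : Type*) [NormedAddCommGroup E] [InnerProductSpace ℝ E]
    (n : ℕ) (α : Fin n → E) (hindep : LinearIndependent ℝ α)
    (s : Fin n → E →ₗ[ℝ] E)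
    (hs : ∀ i v, s i v = v - (2 * ⟪v, α i⟫ / ⟪α i, α i⟫) • α i) :
    ∀ (l : List (Fin n)), l.Nodup → ∀ v : E, (l.map s).prod v = v →
      ∀ i ∈ l, s i v = v := by
  intro l
  induction l with
  | nil => intro _ v _ i hi; exact absurd hi (List.not_mem_nil)
  | cons i l ih =>
    intro hnd v hv j hj
    have hil : i ∉ l := (List.nodup_cons.mp hnd).1
    have hndl : l.Nodup := (List.nodup_cons.mp hnd).2
    set u := (l.map s).prod v with hu
    have h1 : s i u = v := by
      rw [← hv]; simp [List.map_cons, List.prod_cons, Module.End.mul_apply, u]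
    set c := 2 * ⟪u, α i⟫ / ⟪α i, α i⟫ with hc
    have h2 : u - c • α i = v := by rw [← h1, hs i u]
    have hmem : u - v ∈ Submodule.span ℝ (α '' {j | j ∈ l}) :=
      aux_span E n α s hs l v
    have hcv : c • α i = u - v := by rw [← h2]; abel
    have hc0 : c = 0 := by
      by_contra hc0
      have : α i ∈ Submodule.span ℝ (α '' {j | j ∈ l}) := by
        have := Submodule.smul_mem (Submodule.span ℝ (α '' {j | j ∈ l})) c⁻¹
          (hcv ▸ hmem)
        rwa [smul_smul, inv_mul_cancel₀ hc0, one_smul] at this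
      exact hindep.notMem_span_image hil this
    have huv : u = v := by rw [← h2, hc0, zero_smul, sub_zero]
    rcases List.mem_cons.mp hj with rfl | hj'
    · rw [← huv] at h1 ⊢; rw [h1, huv]
    · exact ih hndl v (hu ▸ huv) j hj'

/-- Let `W` be a finite Coxeter group acting as a reflection group on a Euclidean space `E`
spanned by its root system `Φ`, with simple system `α₁, …, α_n` (a basis of `E`) and
simple reflections `s i`.  Then the Coxeter element `w = s₁ ⋯ s_n` does not have `1`
as an eigenvalue. -/
theorem stmt12 (E : Type*) [NormedAddCommGroup E] [InnerProductSpace ℝ E]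
    [FiniteDimensional ℝ E]
    (Φ : Finset E) (hΦ0 : (0 : E) ∉ Φ)
    (hΦspan : Submodule.span ℝ (Φ : Set E) = ⊤)
    (n : ℕ) (α : Fin n → E) (hαΦ : ∀ i, α i ∈ Φ)
    (hindep : LinearIndependent ℝ α)
    (hspan : Submodule.span ℝ (Set.range α) = ⊤)
    (s : Fin n → E →ₗ[ℝ] E)
    (hs : ∀ i v, s i v = v - (2 * ⟪v, α i⟫ / ⟪α i, α i⟫) • α i)
    (w : E →ₗ[ℝ] E) (hw : w = (List.ofFn s).prod) :
    ¬ Module.End.HasEigenvalue w 1 := by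
  intro h
  obtain ⟨v, hv⟩ := h.exists_hasEigenvector
  have hα0 : ∀ i, α i ≠ 0 := fun i h0 => hΦ0 (h0 ▸ hαΦ i)
  have hwv : ((List.finRange n).map s).prod v = v := by
    have := hv.apply_eq_smul
    rw [hw, ← List.ofFn_eq_map] at *
    simpa using this
  have hfix : ∀ i, s i v = v := fun i =>
    aux_fix E n α hindep s hs (List.finRange n) (List.nodup_finRange n) v hwv i
      (List.mem_finRange i)
  have hinner : ∀ i, ⟪v, α i⟫ = 0 := by
    intro i
    have h1 := hfix i
    rw [hs i v] at h1
    have h2 : (2 * ⟪v, α i⟫ / ⟪α i, α i⟫) • α i = 0 := by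
      have := sub_eq_self.mp h1
      exact this
    rcases smul_eq_zero.mp h2 with hz | hz
    · have hne : ⟪α i, α i⟫ ≠ (0:ℝ) := by
        simpa [inner_self_eq_zero] using hα0 i
      have := (div_eq_zero_iff.mp hz).resolve_right hne
      linarith
    · exact absurd hz (hα0 i)
  have hv0 : v = 0 := by
    have : v ∈ (Submodule.span ℝ (Set.range α))ᗮ := by
      rw [Submodule.mem_orthogonal]
      intro x hx
      apply Submodule.span_induction (p := fun x _ => ⟪x, v⟫ = 0) ?_ ?_ ?_ ?_ hx
      · rintro x ⟨i, rfl⟩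
        rw [real_inner_comm]; exact hinner i
      · simp
      · intro a b _ _ ha hb; rw [inner_add_left, ha, hb, add_zero]
      · intro r a _ ha; rw [inner_smul_left, ha, mul_zero]
    rw [hspan] at this
    simpa using this
  exact hv.right hv0
end

section
/- Let α₁, ..., α_n be a basis of a real inner product space E and let s_i be the orthogonal reflection through the hyperplane orthogonal to α_i. Then w = s_1 s_2 ··· s_n fixes no nonzero vector of E. -/
open scoped RealInnerProductSpace

/-- Let `α₁, …, α_n` be a basis of a real inner product space `E` and let `s i` be the
orthogonal reflection through the hyperplane orthogonal to `α i`.  Then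
`w = s₁ s₂ ⋯ s_n` fixes no nonzero vector of `E`. -/
theorem stmt13 (E : Type*) [NormedAddCommGroup E] [InnerProductSpace ℝ E]
    [FiniteDimensional ℝ E]
    (n : ℕ) (α : Fin n → E)
    (hindep : LinearIndependent ℝ α)
    (hspan : Submodule.span ℝ (Set.range α) = ⊤)
    (s : Fin n → E →ₗ[ℝ] E)
    (hs : ∀ i v, s i v = v - (2 * ⟪v, α i⟫ / ⟪α i, α i⟫) • α i)
    (w : E →ₗ[ℝ] E) (hw : w = (List.ofFn s).prod) :
    ∀ v : E, w v = v → v = 0 := by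
  subst hw
  intro v hv
  have hα0 : ∀ i, α i ≠ 0 := fun i => hindep.ne_zero i
  have hαα : ∀ i, ⟪α i, α i⟫ ≠ 0 := fun i h => hα0 i (inner_self_eq_zero.mp h)
  -- Lemma A : the product of reflections moves a vector by an element of the span
  have lemA : ∀ l : List (Fin n), ∀ u : E,
      (l.map s).prod u - u ∈ Submodule.span ℝ (α '' {i | i ∈ l}) := by
    intro l
    induction l with
    | nil => intro u; simp
    | cons i l ih =>
      intro u
      have h1 := ih u
      rw [List.map_cons, List.prod_cons, Module.End.mul_apply]
      set u' := (l.map s).prod u with hu'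
      rw [hs i u']
      have hαi : α i ∈ (α '' {j | j ∈ i :: l}) := ⟨i, by simp, rfl⟩
      have hmono : Submodule.span ℝ (α '' {j | j ∈ l})
          ≤ Submodule.span ℝ (α '' {j | j ∈ i :: l}) := by
        apply Submodule.span_mono
        apply Set.image_mono
        intro x hx
        simp only [Set.mem_setOf_eq, List.mem_cons] at *
        exact Or.inr hx
      have heq : u' - (2 * ⟪u', α i⟫ / ⟪α i, α i⟫) • α i - u
          = (u' - u) - (2 * ⟪u', α i⟫ / ⟪α i, α i⟫) • α i := by abel
      rw [heq]
      exact Submodule.sub_mem _ (hmono h1)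
        (Submodule.smul_mem _ _ (Submodule.subset_span hαi))
  -- Lemma C : if the product over a duplicate-free list fixes v, then v ⊥ α i for i in the list
  have lemC : ∀ l : List (Fin n), l.Nodup → (l.map s).prod v = v →
      ∀ i ∈ l, ⟪v, α i⟫ = 0 := by
    intro l
    induction l with
    | nil => simp
    | cons i l ih =>
      intro hnd hfix j hj
      rw [List.nodup_cons] at hnd
      obtain ⟨hi, hndl⟩ := hnd
      set u := (l.map s).prod v with hu
      have hsi : s i u = v := by
        rw [List.map_cons, List.prod_cons, Module.End.mul_apply] at hfix
        exact hfix
      rw [hs i u] at hsi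
      have huv : u - v = (2 * ⟪u, α i⟫ / ⟪α i, α i⟫) • α i := by
        rw [← hsi]; abel
      have hmem : (2 * ⟪u, α i⟫ / ⟪α i, α i⟫) • α i
          ∈ Submodule.span ℝ (α '' {j | j ∈ l}) := by
        rw [← huv]; exact lemA l v
      have hd0 : (2 * ⟪u, α i⟫ / ⟪α i, α i⟫) = 0 := by
        by_contra hc
        have hmem2 : α i ∈ Submodule.span ℝ (α '' {j | j ∈ l}) := by
          have h2 := Submodule.smul_mem _ (2 * ⟪u, α i⟫ / ⟪α i, α i⟫)⁻¹ hmem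
          rwa [smul_smul, inv_mul_cancel₀ hc, one_smul] at h2
        exact hindep.notMem_span_image (by simpa using hi) hmem2
      have huveq : u = v := by
        rw [hd0, zero_smul, sub_eq_zero] at huv; exact huv
      have hinner_i : ⟪v, α i⟫ = 0 := by
        have : ⟪u, α i⟫ = 0 := by
          rcases div_eq_zero_iff.mp hd0 with h | h
          · linarith
          · exact absurd h (hαα i)
        rwa [huveq] at this
      rcases List.mem_cons.mp hj with rfl | hjl
      · exact hinner_i
      · exact ih hndl huveq j hjl
  have hofn : (List.ofFn s).prod = ((List.finRange n).map s).prod := by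
    rw [List.ofFn_eq_map]
  rw [hofn] at hv
  have hinner : ∀ i, ⟪v, α i⟫ = 0 := fun i =>
    lemC (List.finRange n) (List.nodup_finRange n) hv i (List.mem_finRange i)
  have hvtop : v ∈ Submodule.span ℝ (Set.range α) := by rw [hspan]; trivial
  have h0 : ⟪v, v⟫ = 0 := by
    refine Submodule.span_induction (p := fun x _ => ⟪v, x⟫ = 0) ?_ ?_ ?_ ?_ hvtop
    · rintro x ⟨i, rfl⟩; exact hinner i
    · simp
    · intro x y _ _ hx hy; rw [inner_add_right, hx, hy, add_zero]
    · intro a x _ hx; rw [real_inner_smul_right, hx, mul_zero]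
  exact inner_self_eq_zero.mp h0
end

section
/- Let p be a prime and q an integer coprime to p with q > 2. The congruence subgroup Γ_q = ker(SL_d(ℤ[1/p]) → SL_d(ℤ[1/p]/qℤ[1/p])) is dense in SL_d(ℚ_p). -/
open Matrix

section Transvec

variable {𝕜 : Type*} [Field 𝕜] {d : ℕ}

lemma tv_apply (i j k l : Fin d) (c : 𝕜) :
    transvection i j c k l = (if k = l then (1:𝕜) else 0) + (if i = k ∧ j = l then c else 0) := by
  simp [transvection, single, one_apply]

lemma six_transvec (a b : Fin d) (hab : a ≠ b) (c : 𝕜) (hc : c ≠ 0) :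
    transvection a b c * transvection b a (-c⁻¹) * transvection a b c *
      transvection a b (-1) * transvection b a 1 * transvection a b (-1) =
    diagonal (fun i => if i = a then c else if i = b then c⁻¹ else 1) := by
  ext i j
  rcases eq_or_ne i a with hia | hia <;> rcases eq_or_ne i b with hib | hib <;>
    rcases eq_or_ne j a with hja | hja <;> rcases eq_or_ne j b with hjb | hjb <;>
    simp_all [tv_apply, diagonal_apply, hab, hab.symm] <;> simp_all [eq_comm]

variable (G : Submonoid (Matrix (Fin d) (Fin d) 𝕜))
variable (hT : ∀ (i j : Fin d), i ≠ j → ∀ c : 𝕜, transvection i j c ∈ G)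

include hT

lemma H_mem (a b : Fin d) (hab : a ≠ b) (c : 𝕜) (hc : c ≠ 0) :
    diagonal (fun i => if i = a then c else if i = b then c⁻¹ else 1) ∈ G := by
  rw [← six_transvec a b hab c hc]
  exact mul_mem (mul_mem (mul_mem (mul_mem (mul_mem (hT a b hab c) (hT b a hab.symm _))
    (hT a b hab c)) (hT a b hab _)) (hT b a hab.symm _)) (hT a b hab _)

lemma diag_mem : ∀ (k : ℕ) (D : Fin d → 𝕜), (∏ i, D i) = 1 →
    (∀ i : Fin d, k ≤ (i : ℕ) → D i = 1) → diagonal D ∈ G := by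
  intro k
  induction k with
  | zero =>
    intro D _ hsupp
    have : D = fun _ => 1 := funext fun i => hsupp i (Nat.zero_le _)
    rw [this]
    simpa using one_mem G
  | succ k ih =>
    intro D hdet hsupp
    by_cases hkd : d ≤ k
    · exact ih D hdet fun i hi => absurd (lt_of_lt_of_le i.isLt hkd) (not_lt.mpr hi)
    push_neg at hkd
    rcases Nat.eq_zero_or_pos k with rfl | hk
    · have h0 : (0:ℕ) < d := hkd
      have h1 : ∀ i : Fin d, i ≠ ⟨0, h0⟩ → D i = 1 := by
        intro i hi
        apply hsupp
        rcases Nat.eq_zero_or_pos (i : ℕ) with h | h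
        · exact absurd (Fin.ext h) hi
        · exact h
      have hD0 : D ⟨0, h0⟩ = 1 := by
        rw [← hdet, Finset.prod_eq_single ⟨0, h0⟩ (fun i _ hi => h1 i hi) (by simp)]
      have : D = fun _ => 1 := by
        funext i
        by_cases h : i = ⟨0, h0⟩
        · rw [h]; exact hD0
        · exact h1 i h
      rw [this]; simpa using one_mem G
    · have hk1 : k - 1 < d := lt_trans (Nat.sub_lt hk one_pos) hkd
      set a : Fin d := ⟨k - 1, hk1⟩ with ha
      set b : Fin d := ⟨k, hkd⟩ with hb
      have hab : a ≠ b := by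
        simp only [ha, hb, Ne, Fin.mk.injEq]
        omega
      have hDb : D b ≠ 0 := by
        intro h
        have := Finset.prod_eq_zero (Finset.mem_univ b) h
        rw [hdet] at this
        exact one_ne_zero this
      set D'' : Fin d → 𝕜 := Function.update (Function.update D b 1) a (D a * D b) with hD''
      have hprod : ∏ i, D'' i = 1 := by
        rw [hD'', Finset.prod_update_of_mem (Finset.mem_univ a)]
        have hbmem : b ∈ Finset.univ \ {a} := by simp [hab.symm]
        rw [Finset.prod_update_of_mem hbmem, one_mul]
        rw [Finset.sdiff_singleton_eq_erase, Finset.sdiff_singleton_eq_erase]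
        rw [← hdet, ← Finset.mul_prod_erase _ _ (Finset.mem_univ a),
          ← Finset.mul_prod_erase _ _ (Finset.mem_erase.mpr ⟨hab.symm, Finset.mem_univ b⟩)]
        ring
      have hsupp'' : ∀ i : Fin d, k ≤ (i : ℕ) → D'' i = 1 := by
        intro i hi
        rcases eq_or_ne i b with rfl | hib
        · rw [hD'', Function.update_of_ne hab.symm, Function.update_self]
        · have hia : i ≠ a := by
            intro h
            rw [h] at hi
            simp only [ha] at hi
            omega
          rw [hD'', Function.update_of_ne hia, Function.update_of_ne hib]
          apply hsupp
          have : (i : ℕ) ≠ k := fun h => hib (Fin.ext h)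
          omega
      have key : diagonal D = diagonal D'' *
          diagonal (fun i => if i = a then (D b)⁻¹ else if i = b then D b else 1) := by
        rw [diagonal_mul_diagonal]
        refine congrArg Matrix.diagonal (funext fun i => ?_)
        rcases eq_or_ne i a with rfl | hia
        · rw [if_pos rfl, hD'', Function.update_self]
          field_simp
        · rw [if_neg hia, hD'', Function.update_of_ne hia]
          rcases eq_or_ne i b with rfl | hib
          · rw [if_pos rfl, Function.update_self, one_mul]
          · rw [if_neg hib, Function.update_of_ne hib, mul_one]
      rw [key]
      refine mul_mem (ih D'' hprod hsupp'') ?_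
      have := H_mem G hT a b hab (D b)⁻¹ (inv_ne_zero hDb)
      simpa [inv_inv] using this

lemma det_one_mem (M : Matrix (Fin d) (Fin d) 𝕜) (hM : M.det = 1) : M ∈ G := by
  obtain ⟨L, L', D, h⟩ := Pivot.exists_list_transvec_mul_diagonal_mul_list_transvec M
  have hdet : (∏ i, D i) = 1 := by
    have := hM
    rw [h, det_mul, det_mul, TransvectionStruct.det_toMatrix_prod,
      TransvectionStruct.det_toMatrix_prod, det_diagonal, one_mul, mul_one] at this
    exact this
  have hLmem : ∀ (L : List (TransvectionStruct (Fin d) 𝕜)),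
      (L.map TransvectionStruct.toMatrix).prod ∈ G := by
    intro L
    apply Submonoid.list_prod_mem
    intro x hx
    simp only [List.mem_map] at hx
    obtain ⟨t, _, rfl⟩ := hx
    cases t with
    | mk i j hij c =>
      rw [TransvectionStruct.toMatrix_mk]
      exact hT i j hij c
  rw [h]
  exact mul_mem (mul_mem (hLmem L) (diag_mem G hT d D hdet
    (fun i hi => absurd i.isLt (not_lt.mpr hi)))) (hLmem L')

end Transvec

lemma denseR (p : ℕ) [hp : Fact p.Prime] :
    Dense ((Subring.closure {((p : ℚ_[p]))⁻¹} : Subring ℚ_[p]) : Set ℚ_[p]) := by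
  rw [Metric.dense_iff]
  intro x ε hε
  have hp1 : (1 : ℝ) < p := by exact_mod_cast hp.out.one_lt
  have hp0 : (0 : ℝ) < p := lt_trans one_pos hp1
  have hpQ : ((p : ℚ_[p])) ≠ 0 := by
    exact_mod_cast (Nat.cast_ne_zero (R := ℚ_[p])).mpr hp.out.pos.ne'
  -- find n with ‖p^n * x‖ ≤ 1
  obtain ⟨n, hn⟩ : ∃ n : ℕ, ‖(p : ℚ_[p]) ^ n * x‖ ≤ 1 := by
    rcases eq_or_ne x 0 with rfl | hx
    · exact ⟨0, by simp⟩
    · have hxn : (0:ℝ) < ‖x‖⁻¹ := inv_pos.mpr (norm_pos_iff.mpr hx)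
      obtain ⟨n, hn⟩ := exists_pow_lt_of_lt_one hxn
        (by rw [inv_lt_one_iff₀]; right; exact hp1 : (p:ℝ)⁻¹ < 1)
      refine ⟨n, ?_⟩
      rw [norm_mul, norm_pow, Padic.norm_p]
      calc ((p:ℝ)⁻¹) ^ n * ‖x‖ ≤ ‖x‖⁻¹ * ‖x‖ := by
            apply mul_le_mul_of_nonneg_right hn.le (norm_nonneg x)
        _ = 1 := inv_mul_cancel₀ (norm_pos_iff.mpr hx).ne'
  set y : ℤ_[p] := ⟨(p : ℚ_[p]) ^ n * x, hn⟩ with hy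
  have hδ : (0:ℝ) < ε * ((p:ℝ)⁻¹) ^ n :=
    mul_pos hε (pow_pos (inv_pos.mpr hp0) n)
  obtain ⟨m, hm⟩ := PadicInt.denseRange_intCast.exists_dist_lt y hδ
  set r : ℚ_[p] := (m : ℚ_[p]) * ((p : ℚ_[p])⁻¹) ^ n with hr
  refine ⟨r, Metric.mem_ball.mpr ?_, ?_⟩
  · have hxr : x - r = ((p : ℚ_[p])⁻¹) ^ n * ((p : ℚ_[p]) ^ n * x - m) := by
      rw [mul_sub, ← mul_assoc, ← mul_pow, inv_mul_cancel₀ hpQ, one_pow, one_mul, hr]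
      ring
    have hnorm : ‖x - r‖ = (p:ℝ) ^ n * ‖(y : ℚ_[p]) - (m : ℚ_[p])‖ := by
      rw [hxr, norm_mul, norm_pow, norm_inv, Padic.norm_p, inv_inv]
    have hdist : dist y ((m : ℤ_[p])) = ‖(y : ℚ_[p]) - (m : ℚ_[p])‖ := by
      rw [dist_eq_norm, PadicInt.norm_def]
      push_cast
      rfl
    rw [dist_comm, dist_eq_norm, hnorm]
    calc (p:ℝ) ^ n * ‖(y : ℚ_[p]) - (m : ℚ_[p])‖ < (p:ℝ) ^ n * (ε * ((p:ℝ)⁻¹) ^ n) := by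
          apply mul_lt_mul_of_pos_left _ (pow_pos hp0 n)
          rw [← hdist]; exact hm
      _ = ε := by
          rw [← mul_assoc, mul_comm ((p:ℝ)^n) ε, mul_assoc, ← mul_pow,
            mul_inv_cancel₀ hp0.ne', one_pow, mul_one]
  · exact mul_mem (intCast_mem _ m)
      (pow_mem (Subring.subset_closure (Set.mem_singleton _)) n)

/-- For a prime `p` and an integer `q > 2` coprime to `p`, the congruence subgroup
`Γ_q = ker(SL_d(ℤ[1/p]) → SL_d(ℤ[1/p]/qℤ[1/p]))`, realized as the set of determinant-one
matrices over `ℚ_p` with entries in `ℤ[1/p]` congruent to the identity mod `q`, is dense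
in `SL_d(ℚ_p)`. -/
theorem stmt16 (p : ℕ) [Fact p.Prime] (d : ℕ) (hd : 2 ≤ d)
    (q : ℤ) (hq : 2 < q) (hqp : IsCoprime q (p : ℤ)) :
    ∀ A : Matrix (Fin d) (Fin d) ℚ_[p], A.det = 1 →
      A ∈ closure {B : Matrix (Fin d) (Fin d) ℚ_[p] |
        B.det = 1 ∧ ∀ i j, B i j ∈ Subring.closure {((p : ℚ_[p]))⁻¹} ∧
          ∃ c ∈ Subring.closure {((p : ℚ_[p]))⁻¹},
            B i j - (1 : Matrix (Fin d) (Fin d) ℚ_[p]) i j = (q : ℚ_[p]) * c} := by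
  intro A hA
  set R : Subring ℚ_[p] := Subring.closure {((p : ℚ_[p]))⁻¹} with hRdef
  set S : Set (Matrix (Fin d) (Fin d) ℚ_[p]) := {B : Matrix (Fin d) (Fin d) ℚ_[p] |
        B.det = 1 ∧ ∀ i j, B i j ∈ R ∧
          ∃ c ∈ R, B i j - (1 : Matrix (Fin d) (Fin d) ℚ_[p]) i j = (q : ℚ_[p]) * c} with hSdef
  have hqR : (q : ℚ_[p]) ∈ R := intCast_mem R q
  -- S is a submonoid
  have hone : (1 : Matrix (Fin d) (Fin d) ℚ_[p]) ∈ S := by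
    refine ⟨det_one, fun i j => ⟨?_, 0, zero_mem R, by simp⟩⟩
    by_cases h : i = j <;> simp [Matrix.one_apply, h, one_mem, zero_mem]
  have hmul : ∀ B B', B ∈ S → B' ∈ S → B * B' ∈ S := by
    rintro B B' ⟨hB1, hB2⟩ ⟨hB'1, hB'2⟩
    obtain ⟨C, hCR, hCeq⟩ : ∃ C : Matrix (Fin d) (Fin d) ℚ_[p],
        (∀ i j, C i j ∈ R) ∧ B = 1 + (q : ℚ_[p]) • C := by
      choose C hCR hCe using fun i j => (hB2 i j).2
      refine ⟨fun i j => C i j, hCR, ?_⟩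
      ext i j
      have := hCe i j
      show B i j = (1 : Matrix (Fin d) (Fin d) ℚ_[p]) i j + (q : ℚ_[p]) * C i j
      linear_combination this
    obtain ⟨C', hC'R, hC'eq⟩ : ∃ C' : Matrix (Fin d) (Fin d) ℚ_[p],
        (∀ i j, C' i j ∈ R) ∧ B' = 1 + (q : ℚ_[p]) • C' := by
      choose C hCR hCe using fun i j => (hB'2 i j).2
      refine ⟨fun i j => C i j, hCR, ?_⟩
      ext i j
      have := hCe i j
      show B' i j = (1 : Matrix (Fin d) (Fin d) ℚ_[p]) i j + (q : ℚ_[p]) * C i j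
      linear_combination this
    have hexp : B * B' = 1 + (q : ℚ_[p]) • C + (q : ℚ_[p]) • C' +
        ((q : ℚ_[p]) * q) • (C * C') := by
      rw [hCeq, hC'eq]
      simp only [Matrix.mul_add, Matrix.add_mul, Matrix.one_mul, Matrix.mul_one,
        smul_mul_assoc, mul_smul_comm, smul_smul, smul_add]
      abel
    refine ⟨by rw [det_mul, hB1, hB'1, one_mul], fun i j => ⟨?_, ?_⟩⟩
    · rw [Matrix.mul_apply]
      exact Subring.sum_mem R fun k _ => mul_mem (hB2 i k).1 (hB'2 k j).1
    · refine ⟨C i j + C' i j + (q : ℚ_[p]) * (C * C') i j, ?_, ?_⟩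
      · refine add_mem (add_mem (hCR i j) (hC'R i j)) (mul_mem hqR ?_)
        rw [Matrix.mul_apply]
        exact Subring.sum_mem R fun k _ => mul_mem (hCR i k) (hC'R k j)
      · rw [hexp]
        simp only [Matrix.add_apply, Matrix.smul_apply, smul_eq_mul]
        ring
  let Smon : Submonoid (Matrix (Fin d) (Fin d) ℚ_[p]) :=
    { carrier := S, one_mem' := hone, mul_mem' := fun ha hb => hmul _ _ ha hb }
  let G := Smon.topologicalClosure
  have hq0 : (q : ℚ_[p]) ≠ 0 := by
    exact_mod_cast (Int.cast_ne_zero (α := ℚ_[p])).mpr (by omega)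
  -- every transvection lies in G
  have hT : ∀ (i j : Fin d), i ≠ j → ∀ c : ℚ_[p], transvection i j c ∈ G := by
    intro i j hij c
    have hTS : ∀ x ∈ R, transvection i j ((q : ℚ_[p]) * x) ∈ S := by
      intro x hx
      refine ⟨det_transvection_of_ne i j hij _, fun k l => ⟨?_, ?_⟩⟩
      · rw [tv_apply]
        refine add_mem ?_ ?_ <;> split_ifs <;>
          first
            | exact one_mem R
            | exact zero_mem R
            | exact mul_mem hqR hx
      · refine ⟨if i = k ∧ j = l then x else 0, ?_, ?_⟩
        · split_ifs
          · exact hx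
          · exact zero_mem R
        · rw [tv_apply, Matrix.one_apply]
          split_ifs <;> ring
    have hdense : Dense ((fun x : ℚ_[p] => (q : ℚ_[p]) * x) '' (R : Set ℚ_[p])) := by
      apply DenseRange.dense_image
      · exact (Equiv.mulLeft₀ (q : ℚ_[p]) hq0).surjective.denseRange
      · exact continuous_mul_left _
      · exact denseR p
    have hcont : Continuous (fun t : ℚ_[p] => transvection i j t) := by
      have : (fun t : ℚ_[p] => transvection i j t) =
          fun t : ℚ_[p] => 1 + t • single i j (1 : ℚ_[p]) := by
        funext t
        rw [transvection, smul_single, smul_eq_mul, mul_one]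
      rw [this]
      exact continuous_const.add (continuous_id.smul continuous_const)
    have h1 : c ∈ closure ((fun x : ℚ_[p] => (q : ℚ_[p]) * x) '' (R : Set ℚ_[p])) := hdense c
    have h2 : transvection i j c ∈
        closure ((fun t : ℚ_[p] => transvection i j t) ''
          ((fun x : ℚ_[p] => (q : ℚ_[p]) * x) '' (R : Set ℚ_[p]))) :=
      image_closure_subset_closure_image hcont (Set.mem_image_of_mem _ h1)
    refine closure_mono ?_ h2
    rintro _ ⟨_, ⟨x, hxR, rfl⟩, rfl⟩
    exact hTS x hxR
  exact det_one_mem G hT A hA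
end
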